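/- Let d ≥ 1, ε > 0, and let q₁, …, q_N be pairwise distinct points in ℝ^d. Then the N × N matrix A with entries A_{ij} = (1 + ε²‖q_i − q_j‖²)^{−1/2} (the Gram matrix of the inverse multiquadric radial basis function) is symmetric and positive definite; in particular, A is invertible. -/

import Mathlib

set_option maxHeartbeats 1000000

open Finset MeasureTheory Real Filter

lemma imq_lemA {d N : ℕ} (v : Fin N → EuclideanSpace ℝ (Fin d)) (y : Fin N → ℝ) (n : ℕ) :
    0 ≤ ∑ i, ∑ j, y i * y j * (inner ℝ (v i) (v j) : ℝ) ^ n := by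
  have key : ∀ i j : Fin N, (inner ℝ (v i) (v j) : ℝ) ^ n
      = ∑ p : Fin n → Fin d, ∏ l, v i (p l) * v j (p l) := by
    intro i j
    have hinner : (inner ℝ (v i) (v j) : ℝ) = ∑ k, v i k * v j k := by
      simp [PiLp.inner_apply, RCLike.inner_apply, mul_comm]
    rw [hinner, ← Fin.prod_const n (∑ k, v i k * v j k), Finset.prod_univ_sum]
    simp
  set t : Fin N → (Fin n → Fin d) → ℝ := fun i p => y i * ∏ l, v i (p l) with ht
  calc (0:ℝ) ≤ ∑ p : Fin n → Fin d, (∑ i, t i p) ^ 2 := by positivity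
    _ = ∑ p : Fin n → Fin d, ∑ i, ∑ j, t i p * t j p := by
        refine Finset.sum_congr rfl fun p _ => ?_
        rw [sq, Finset.sum_mul_sum]
    _ = ∑ i, ∑ p : Fin n → Fin d, ∑ j, t i p * t j p := Finset.sum_comm
    _ = ∑ i, ∑ j, ∑ p : Fin n → Fin d, t i p * t j p := by
        exact Finset.sum_congr rfl fun i _ => Finset.sum_comm
    _ = ∑ i, ∑ j, y i * y j * (inner ℝ (v i) (v j) : ℝ) ^ n := by
        refine Finset.sum_congr rfl fun i _ => Finset.sum_congr rfl fun j _ => ?_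
        rw [key, Finset.mul_sum]
        refine Finset.sum_congr rfl fun p _ => ?_
        rw [Finset.prod_mul_distrib, ht]; ring

lemma imq_lemB {d N : ℕ} (v : Fin N → EuclideanSpace ℝ (Fin d)) (y : Fin N → ℝ) :
    0 ≤ ∑ i, ∑ j, y i * y j * Real.exp (inner ℝ (v i) (v j) : ℝ) := by
  have hexp : ∀ x : ℝ, Real.exp x = ∑' n : ℕ, x ^ n / (n.factorial : ℝ) := by
    intro x
    rw [Real.exp_eq_exp_ℝ, NormedSpace.exp_eq_tsum_div]
  rw [← Fintype.sum_prod_type']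
  calc (0:ℝ) ≤ ∑' n : ℕ, ∑ p : Fin N × Fin N,
        y p.1 * y p.2 * ((inner ℝ (v p.1) (v p.2) : ℝ) ^ n / n.factorial) := by
        refine tsum_nonneg fun n => ?_
        have h1 : ∀ p : Fin N × Fin N,
            y p.1 * y p.2 * ((inner ℝ (v p.1) (v p.2) : ℝ) ^ n / n.factorial)
            = (y p.1 * y p.2 * (inner ℝ (v p.1) (v p.2) : ℝ) ^ n) * ((n.factorial : ℝ))⁻¹ := by
          intro p; field_simp
        simp only [h1, ← Finset.sum_mul]
        have := imq_lemA v y n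
        rw [← Fintype.sum_prod_type'] at this
        positivity
    _ = ∑ p : Fin N × Fin N, y p.1 * y p.2 * Real.exp (inner ℝ (v p.1) (v p.2) : ℝ) := by
        rw [Summable.tsum_finsetSum (fun p _ => (Real.summable_pow_div_factorial _).mul_left _)]
        refine Finset.sum_congr rfl fun p _ => ?_
        rw [hexp, ← tsum_mul_left]

lemma imq_lemC {d N : ℕ} (q : Fin N → EuclideanSpace ℝ (Fin d)) (x : Fin N → ℝ)
    (c : ℝ) (hc : 0 ≤ c) :
    0 ≤ ∑ i, ∑ j, x i * x j * Real.exp (-c * ‖q i - q j‖ ^ 2) := by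
  set v : Fin N → EuclideanSpace ℝ (Fin d) := fun i => Real.sqrt (2 * c) • q i with hv
  set y : Fin N → ℝ := fun i => x i * Real.exp (-c * ‖q i‖ ^ 2) with hy
  have key : ∀ i j, x i * x j * Real.exp (-c * ‖q i - q j‖ ^ 2)
      = y i * y j * Real.exp (inner ℝ (v i) (v j) : ℝ) := by
    intro i j
    have hin : (inner ℝ (v i) (v j) : ℝ) = 2 * c * (inner ℝ (q i) (q j) : ℝ) := by
      rw [hv]
      rw [real_inner_smul_left, real_inner_smul_right, ← mul_assoc,
        Real.mul_self_sqrt (by positivity : (0:ℝ) ≤ 2 * c)]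
    have hnorm : ‖q i - q j‖ ^ 2 = ‖q i‖ ^ 2 - 2 * (inner ℝ (q i) (q j) : ℝ) + ‖q j‖ ^ 2 :=
      norm_sub_sq_real (q i) (q j)
    have hsplit : Real.exp (-c * (‖q i‖ ^ 2 - 2 * (inner ℝ (q i) (q j) : ℝ) + ‖q j‖ ^ 2))
        = Real.exp (-c * ‖q i‖ ^ 2) * Real.exp (-c * ‖q j‖ ^ 2)
          * Real.exp (2 * c * (inner ℝ (q i) (q j) : ℝ)) := by
      rw [← Real.exp_add, ← Real.exp_add]; ring_nf
    rw [hin, hy]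
    simp only []
    rw [hnorm, hsplit]
    ring
  simp only [key]
  exact imq_lemB v y

lemma imq_lemD {s : ℝ} (hs : 0 ≤ s) :
    ((1 + s) ^ (-(1:ℝ) / 2) : ℝ) = (Real.sqrt π)⁻¹ * ∫ u : ℝ, Real.exp (-(1 + s) * u ^ 2) := by
  have h1 : (0:ℝ) < 1 + s := by linarith
  have hπ : Real.sqrt π ≠ 0 := by positivity
  have h2 : Real.sqrt (1 + s) ≠ 0 := by positivity
  rw [integral_gaussian, Real.sqrt_div Real.pi_pos.le, neg_div, Real.rpow_neg h1.le,
    ← Real.sqrt_eq_rpow]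
  field_simp

lemma imq_quadform_pos {d N : ℕ} (ε : ℝ) (hε : 0 < ε)
    (q : Fin N → EuclideanSpace ℝ (Fin d)) (hq : Function.Injective q)
    (x : Fin N → ℝ) (hx : x ≠ 0) :
    0 < ∑ p : Fin N × Fin N,
      x p.1 * x p.2 * ((1 + ε ^ 2 * ‖q p.1 - q p.2‖ ^ 2) ^ (-(1:ℝ) / 2) : ℝ) := by
  set Q : ℝ → ℝ := fun u => ∑ p : Fin N × Fin N,
      x p.1 * x p.2 * Real.exp (-(u ^ 2 * ε ^ 2) * ‖q p.1 - q p.2‖ ^ 2) with hQ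
  set g : ℝ → ℝ := fun u => Real.exp (-u ^ 2) * Q u with hg
  set f : Fin N × Fin N → ℝ → ℝ := fun p u =>
      x p.1 * x p.2 * Real.exp (-(1 + ε ^ 2 * ‖q p.1 - q p.2‖ ^ 2) * u ^ 2) with hf
  have hbpos : ∀ p : Fin N × Fin N, (0:ℝ) < 1 + ε ^ 2 * ‖q p.1 - q p.2‖ ^ 2 := by
    intro p; positivity
  have hfint : ∀ p : Fin N × Fin N, Integrable (f p) := fun p =>
    (integrable_exp_neg_mul_sq (hbpos p)).const_mul _
  have hsum_f : ∀ u : ℝ, ∑ p : Fin N × Fin N, f p u = g u := by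
    intro u
    simp only [hg, hQ, hf, Finset.mul_sum]
    refine Finset.sum_congr rfl fun p _ => ?_
    rw [show -(1 + ε ^ 2 * ‖q p.1 - q p.2‖ ^ 2) * u ^ 2
        = -u ^ 2 + -(u ^ 2 * ε ^ 2) * ‖q p.1 - q p.2‖ ^ 2 by ring, Real.exp_add]
    ring
  have hgint : Integrable g := by
    have := integrable_finset_sum (μ := volume) Finset.univ fun p _ => hfint p
    simpa [funext hsum_f] using this
  have hg0 : ∀ u : ℝ, 0 ≤ g u := by
    intro u
    have hQ0 : 0 ≤ Q u := by
      rw [hQ]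
      simp only [Fintype.sum_prod_type]
      exact imq_lemC q x (u ^ 2 * ε ^ 2) (by positivity)
    exact mul_nonneg (Real.exp_pos _).le hQ0
  have hgcont : Continuous g := by
    rw [hg, hQ]
    fun_prop
  -- a point where g is positive
  obtain ⟨i0, hi0⟩ : ∃ i, x i ≠ 0 := Function.ne_iff.mp hx
  have hLpos : (0:ℝ) < ∑ i, x i ^ 2 := by
    refine Finset.sum_pos' (fun i _ => sq_nonneg _) ⟨i0, Finset.mem_univ _, ?_⟩
    positivity
  have hQtendsto : Filter.Tendsto Q Filter.atTop (nhds (∑ i, x i ^ 2)) := by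
    have hL : (∑ i, x i ^ 2) = ∑ p : Fin N × Fin N,
        (if p.1 = p.2 then x p.1 * x p.2 else 0) := by
      rw [Fintype.sum_prod_type]
      refine Finset.sum_congr rfl fun i _ => ?_
      simp [Finset.sum_ite_eq, sq]
    rw [hL, hQ]
    refine tendsto_finset_sum _ fun p _ => ?_
    by_cases hp : p.1 = p.2
    · simp only [hp, if_pos, sub_self, norm_zero]
      simpa using tendsto_const_nhds (x := x p.2 * x p.2)
    · simp only [hp, if_neg, not_false_iff]
      have hr : 0 < ‖q p.1 - q p.2‖ := by
        rw [norm_pos_iff, sub_ne_zero]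
        exact fun h => hp (hq h)
      have h1 : Filter.Tendsto (fun u : ℝ => -(u ^ 2 * ε ^ 2) * ‖q p.1 - q p.2‖ ^ 2)
          Filter.atTop Filter.atBot := by
        have h0 : Filter.Tendsto (fun u : ℝ => u ^ 2 * (ε ^ 2 * ‖q p.1 - q p.2‖ ^ 2))
            Filter.atTop Filter.atTop :=
          Filter.Tendsto.atTop_mul_const (by positivity)
            (tendsto_pow_atTop (by norm_num))
        refine (Filter.tendsto_neg_atTop_atBot.comp h0).congr fun u => ?_
        show -(u ^ 2 * (ε ^ 2 * ‖q p.1 - q p.2‖ ^ 2)) = _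
        ring
      have h2 := Real.tendsto_exp_atBot.comp h1
      simpa using (h2.const_mul (x p.1 * x p.2))
  obtain ⟨u0, hu0⟩ : ∃ u : ℝ, 0 < Q u :=
    (hQtendsto.eventually (eventually_gt_nhds hLpos)).exists
  have hgu0 : 0 < g u0 := mul_pos (Real.exp_pos _) hu0
  -- positivity of the integral
  have hintpos : 0 < ∫ u : ℝ, g u := by
    rw [integral_pos_iff_support_of_nonneg_ae (Filter.Eventually.of_forall hg0) hgint]
    have hopen : IsOpen (Function.support g) := by
      rw [Function.support_eq_preimage]
      exact hgcont.isOpen_preimage _ (isOpen_compl_singleton)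
    exact hopen.measure_pos volume ⟨u0, by simp [Function.mem_support, hgu0.ne']⟩
  -- rewrite the quadratic form as the integral
  have hrw : ∑ p : Fin N × Fin N,
      x p.1 * x p.2 * ((1 + ε ^ 2 * ‖q p.1 - q p.2‖ ^ 2) ^ (-(1:ℝ) / 2) : ℝ)
      = (Real.sqrt π)⁻¹ * ∫ u : ℝ, g u := by
    have h1 : ∀ p : Fin N × Fin N,
        x p.1 * x p.2 * ((1 + ε ^ 2 * ‖q p.1 - q p.2‖ ^ 2) ^ (-(1:ℝ) / 2) : ℝ)
        = (Real.sqrt π)⁻¹ * ∫ u : ℝ, f p u := by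
      intro p
      rw [imq_lemD (by positivity : (0:ℝ) ≤ ε ^ 2 * ‖q p.1 - q p.2‖ ^ 2)]
      rw [hf]
      simp only []
      rw [MeasureTheory.integral_const_mul]
      ring
    calc ∑ p : Fin N × Fin N,
        x p.1 * x p.2 * ((1 + ε ^ 2 * ‖q p.1 - q p.2‖ ^ 2) ^ (-(1:ℝ) / 2) : ℝ)
        = ∑ p : Fin N × Fin N, (Real.sqrt π)⁻¹ * ∫ u : ℝ, f p u :=
          Finset.sum_congr rfl fun p _ => h1 p
      _ = (Real.sqrt π)⁻¹ * ∑ p : Fin N × Fin N, ∫ u : ℝ, f p u := by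
          rw [Finset.mul_sum]
      _ = (Real.sqrt π)⁻¹ * ∫ u : ℝ, ∑ p : Fin N × Fin N, f p u := by
          rw [MeasureTheory.integral_finset_sum _ fun p _ => hfint p]
      _ = (Real.sqrt π)⁻¹ * ∫ u : ℝ, g u := by
          congr 1
          exact integral_congr_ae (Filter.Eventually.of_forall fun u => hsum_f u)
  rw [hrw]
  have hπ : (0:ℝ) < (Real.sqrt π)⁻¹ := by positivity
  exact mul_pos hπ hintpos

/-- The Gram matrix of the inverse multiquadric RBF
`φ(r) = (1 + ε²r²)^(-1/2)` at pairwise distinct nodes in `ℝ^d` is symmetric and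
positive definite; in particular it is invertible (nonzero determinant). -/
theorem inverse_multiquadric_gram_posDef (d N : ℕ) (hd : 1 ≤ d) (ε : ℝ) (hε : 0 < ε)
    (q : Fin N → EuclideanSpace ℝ (Fin d)) (hq : Function.Injective q)
    (A : Matrix (Fin N) (Fin N) ℝ)
    (hA : ∀ i j, A i j = (1 + ε ^ 2 * ‖q i - q j‖ ^ 2) ^ (-(1 : ℝ) / 2)) :
    A.IsSymm ∧ A.PosDef ∧ A.det ≠ 0 := by
  have hsymm : A.IsSymm := by
    rw [Matrix.IsSymm]
    ext i j
    rw [Matrix.transpose_apply, hA, hA, norm_sub_rev]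
  have hpd : A.PosDef := by
    rw [Matrix.posDef_iff_dotProduct_mulVec]
    constructor
    · show A.conjTranspose = A
      ext i j
      rw [Matrix.conjTranspose_apply, hA, hA, norm_sub_rev]
      rfl
    · intro x hx
      have h := imq_quadform_pos ε hε q hq x hx
      have heq : dotProduct (star x) (A.mulVec x)
          = ∑ p : Fin N × Fin N, x p.1 * x p.2 * A p.1 p.2 := by
        simp only [star_trivial, dotProduct, Matrix.mulVec, Fintype.sum_prod_type,
          Finset.mul_sum]
        exact Finset.sum_congr rfl fun i _ => Finset.sum_congr rfl fun j _ => by ring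
      rw [heq]
      simp only [hA]
      exact h
  exact ⟨hsymm, hpd, hpd.det_pos.ne'⟩
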